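/- Let k ≥ 2 and let f : ℕ → ℂ be a k-regular sequence with a linear representation f(n) = wᵀ A_{i_0} ⋯ A_{i_s} v for (n)_k = i_s ⋯ i_0. Then there exists a constant c_f > 0 such that |f(n)| = O(n^{c_f}); in particular every k-regular sequence grows at most polynomially. -/

import Mathlib

open Filter Matrix

noncomputable def mnorm {d : ℕ} (A : Matrix (Fin d) (Fin d) ℂ) : ℝ :=
  ‖Matrix.toEuclideanCLM (𝕜 := ℂ) (n := Fin d) A‖

/-- The joint spectral radius of a finite family of matrices. -/
noncomputable def jsr {k d : ℕ} (A : Fin k → Matrix (Fin d) (Fin d) ℂ) : ℝ :=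
  Filter.limsup (fun n : ℕ =>
    ⨆ w : Fin n → Fin k, mnorm (List.ofFn (fun j => A (w j))).prod ^ ((n : ℝ)⁻¹))
    Filter.atTop

/-- The spectral radius of a single matrix. -/
noncomputable def specRad {d : ℕ} (A : Matrix (Fin d) (Fin d) ℂ) : ℝ :=
  (spectralRadius ℂ A).toReal

/-- The k-kernel of a sequence. -/
def kKernel {K : Type*} (k : ℕ) (f : ℕ → K) : Set (ℕ → K) :=
  {g | ∃ ℓ r : ℕ, r < k ^ ℓ ∧ g = fun n => f (k ^ ℓ * n + r)}

/-- A sequence is k-regular if the span of its k-kernel is finite dimensional. -/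
def IsKRegular (K : Type*) [Field K] (k : ℕ) (f : ℕ → K) : Prop :=
  FiniteDimensional K (Submodule.span K (kKernel k f))

/-- The product A_{i_0} ⋯ A_{i_s} along the base-k digits (n)_k = i_s ⋯ i_0 of n. -/
def digProd {K : Type*} [Semiring K] {d k : ℕ} (A : Fin k → Matrix (Fin d) (Fin d) K)
    (n : ℕ) : Matrix (Fin d) (Fin d) K :=
  ((Nat.digits k n).map (fun i => if h : i < k then A ⟨i, h⟩ else 1)).prod

attribute [local instance] Matrix.linftyOpNormedRing

private lemma list_prod_norm_le {d : ℕ} (B : ℝ) (hB : 1 ≤ B)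
    (l : List (Matrix (Fin d) (Fin d) ℂ)) (hl : ∀ M ∈ l, ‖M‖ ≤ B) :
    ‖l.prod‖ ≤ B ^ l.length := by
  induction l with
  | nil =>
      simp only [List.prod_nil, List.length_nil, pow_zero]
      rw [show (1 : Matrix (Fin d) (Fin d) ℂ) = Matrix.diagonal 1 from (Matrix.diagonal_one).symm,
        Matrix.linfty_opNorm_diagonal]
      exact pi_norm_le_iff_of_nonneg zero_le_one |>.2 (fun i => by simp)
  | cons a t ih =>
      have h1 : ‖a * t.prod‖ ≤ ‖a‖ * ‖t.prod‖ := Matrix.linfty_opNorm_mul _ _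
      have h2 : ‖t.prod‖ ≤ B ^ t.length := ih (fun M hM => hl M (List.mem_cons_of_mem _ hM))
      have h3 : ‖a‖ ≤ B := hl a List.mem_cons_self
      calc ‖(a :: t).prod‖ = ‖a * t.prod‖ := by rw [List.prod_cons]
        _ ≤ ‖a‖ * ‖t.prod‖ := h1
        _ ≤ B * B ^ t.length := by
            exact mul_le_mul h3 h2 (norm_nonneg _) (le_trans zero_le_one hB)
        _ = B ^ (a :: t).length := by rw [List.length_cons, pow_succ']

/-- Allouche–Shallit: every k-regular sequence grows at most
    polynomially: |f(n)| = O(n^{c_f}). -/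
theorem stmt14 {k d : ℕ} (hk : 2 ≤ k) (f : ℕ → ℂ)
    (A : Fin k → Matrix (Fin d) (Fin d) ℂ) (v w : Fin d → ℂ)
    (hrep : ∀ n : ℕ, f n = dotProduct w ((digProd A n).mulVec v)) :
    ∃ c : ℝ, 0 < c ∧ ∃ C : ℝ, 0 < C ∧
      ∀ n : ℕ, 1 ≤ n → ‖f n‖ ≤ C * (n : ℝ) ^ c := by
  set B : ℝ := 2 + ∑ i, ‖A i‖ with hBdef
  have hsum : (0:ℝ) ≤ ∑ i, ‖A i‖ := Finset.sum_nonneg fun i _ => norm_nonneg _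
  have hB2 : (2:ℝ) ≤ B := by simpa [hBdef] using hsum
  have hB1 : (1:ℝ) < B := by linarith
  have hB0 : (0:ℝ) < B := by linarith
  have hk1 : (1:ℝ) < (k:ℝ) := by exact_mod_cast lt_of_lt_of_le one_lt_two hk
  have hk0 : (0:ℝ) < (k:ℝ) := by linarith
  set c : ℝ := Real.logb k B with hcdef
  have hc : 0 < c := Real.logb_pos hk1 hB1
  set W : ℝ := ∑ i, ‖w i‖ with hWdef
  have hW : 0 ≤ W := Finset.sum_nonneg fun i _ => norm_nonneg _
  refine ⟨c, hc, (W * ‖v‖ + 1) * B, by positivity, fun n hn => ?_⟩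
  -- bound on the matrix product
  have hbound : ∀ M ∈ (Nat.digits k n).map
      (fun i => if h : i < k then A ⟨i, h⟩ else 1), ‖M‖ ≤ B := by
    intro M hM
    rcases List.mem_map.1 hM with ⟨i, _, rfl⟩
    split
    · calc ‖A _‖ ≤ ∑ j, ‖A j‖ := Finset.single_le_sum (fun j _ => norm_nonneg _) (Finset.mem_univ _)
        _ ≤ B := by linarith
    · calc ‖(1 : Matrix (Fin d) (Fin d) ℂ)‖ ≤ 1 := by
            rw [show (1 : Matrix (Fin d) (Fin d) ℂ) = Matrix.diagonal 1 from
              (Matrix.diagonal_one).symm, Matrix.linfty_opNorm_diagonal]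
            exact pi_norm_le_iff_of_nonneg zero_le_one |>.2 (fun i => by simp)
        _ ≤ B := hB1.le
  have hlen : ((Nat.digits k n).map
      (fun i => if h : i < k then A ⟨i, h⟩ else 1)).length = Nat.log k n + 1 := by
    rw [List.length_map, Nat.digits_len _ _ hk (Nat.one_le_iff_ne_zero.1 hn)]
  have hprod : ‖digProd A n‖ ≤ B ^ (Nat.log k n + 1) := by
    rw [digProd, ← hlen]
    exact list_prod_norm_le B hB1.le _ hbound
  -- bound f n
  have hdot : ‖f n‖ ≤ W * (‖digProd A n‖ * ‖v‖) := by
    rw [hrep n]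
    calc ‖dotProduct w ((digProd A n).mulVec v)‖
        ≤ ∑ i, ‖w i * ((digProd A n).mulVec v) i‖ := norm_sum_le _ _
      _ ≤ ∑ i, ‖w i‖ * ‖(digProd A n).mulVec v‖ := by
          refine Finset.sum_le_sum fun i _ => ?_
          rw [norm_mul]
          exact mul_le_mul_of_nonneg_left (norm_le_pi_norm _ i) (norm_nonneg _)
      _ = W * ‖(digProd A n).mulVec v‖ := by rw [← Finset.sum_mul]
      _ ≤ W * (‖digProd A n‖ * ‖v‖) :=
          mul_le_mul_of_nonneg_left (Matrix.linfty_opNorm_mulVec _ _) hW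
  -- B ^ (Nat.log k n) ≤ n ^ c
  have hn0 : (0:ℝ) < (n:ℝ) := by exact_mod_cast hn
  have hkey : (B : ℝ) ^ (Nat.log k n) ≤ (n : ℝ) ^ c := by
    have h1 : ((k : ℝ) ^ (Nat.log k n) : ℝ) ≤ (n : ℝ) := by
      exact_mod_cast Nat.pow_log_le_self k (Nat.one_le_iff_ne_zero.1 hn)
    have hB' : B = (k:ℝ) ^ c := (Real.rpow_logb hk0 (ne_of_gt hk1) hB0).symm
    have h2 : (B : ℝ) ^ (Nat.log k n) = ((k:ℝ) ^ (Nat.log k n) : ℝ) ^ c := by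
      conv_lhs => rw [hB']
      rw [← Real.rpow_natCast ((k:ℝ)^c) (Nat.log k n), ← Real.rpow_natCast (k:ℝ) (Nat.log k n),
        ← Real.rpow_mul hk0.le, ← Real.rpow_mul hk0.le, mul_comm]
    rw [h2]
    exact Real.rpow_le_rpow (by positivity) h1 hc.le
  have hBpow : (0:ℝ) ≤ B ^ (Nat.log k n) := by positivity
  calc ‖f n‖ ≤ W * (‖digProd A n‖ * ‖v‖) := hdot
    _ ≤ W * (B ^ (Nat.log k n + 1) * ‖v‖) := by
        refine mul_le_mul_of_nonneg_left (mul_le_mul_of_nonneg_right hprod (norm_nonneg _)) hW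
    _ = W * ‖v‖ * B * B ^ (Nat.log k n) := by ring
    _ ≤ (W * ‖v‖ + 1) * B * B ^ (Nat.log k n) := by nlinarith [norm_nonneg v, hBpow]
    _ ≤ (W * ‖v‖ + 1) * B * ((n:ℝ) ^ c) := by
        refine mul_le_mul_of_nonneg_left hkey (by positivity)
    _ = (W * ‖v‖ + 1) * B * (n:ℝ) ^ c := rfl
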